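/- Any pair of elements of a Cayley-Dickson loop Q_n generates a subloop isomorphic to a subgroup of the quaternion group of order 8; in particular every two-generated subloop of Q_n is an associative group. -/

import Mathlib

/-- The underlying set of the Cayley-Dickson loop `Q n`:
`Q 0 = {±1}` (encoded as `Bool`, `false = 1`, `true = -1`) and `Q (n+1) = Q n × Bool`,
an element `(x, b)` encoding `(x, 0)` if `b = false` and `(x, 1)` if `b = true`. -/
def Q : ℕ → Type
  | 0 => Bool
  | n+1 => Q n × Bool

namespace Q

def one : ∀ n, Q n
  | 0 => false
  | n+1 => (one n, false)

def neg : ∀ n, Q n → Q n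
  | 0, x => !x
  | n+1, (x, b) => (neg n x, b)

def conj : ∀ n, Q n → Q n
  | 0, x => x
  | n+1, (x, false) => (conj n x, false)
  | n+1, (x, true) => (neg n x, true)

/-- Cayley-Dickson doubling multiplication restricted to the loop:
`(x,0)(y,0) = (xy,0)`, `(x,0)(y,1) = (yx,1)`, `(x,1)(y,0) = (xy*,1)`, `(x,1)(y,1) = (-y*x,0)`. -/
def mul : ∀ n, Q n → Q n → Q n
  | 0, x, y => xor x y
  | n+1, (x, false), (y, false) => (mul n x y, false)
  | n+1, (x, false), (y, true)  => (mul n y x, true)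
  | n+1, (x, true),  (y, false) => (mul n x (conj n y), true)
  | n+1, (x, true),  (y, true)  => (neg n (mul n (conj n y) x), false)

instance (n : ℕ) : One (Q n) := ⟨one n⟩
instance (n : ℕ) : Neg (Q n) := ⟨neg n⟩
instance (n : ℕ) : Mul (Q n) := ⟨mul n⟩
instance (n : ℕ) : Star (Q n) := ⟨conj n⟩
/-- In `Q n` the inverse of `x` is its conjugate `x*`. -/
instance (n : ℕ) : Inv (Q n) := ⟨conj n⟩

instance instDecEq : ∀ n, DecidableEq (Q n)
  | 0 => inferInstanceAs (DecidableEq Bool)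
  | n+1 => letI := instDecEq n; inferInstanceAs (DecidableEq (Q n × Bool))

instance instFintype : ∀ n, Fintype (Q n)
  | 0 => inferInstanceAs (Fintype Bool)
  | n+1 => letI := instFintype n; inferInstanceAs (Fintype (Q n × Bool))

/-- Powers in `Q n` (well defined by diassociativity). -/
def pow {n : ℕ} (x : Q n) : ℕ → Q n
  | 0 => 1
  | k+1 => x * pow x k

/-- The embedding `x ↦ (x, 0)` of `Q n` into `Q (n+1)`. -/
def up {n : ℕ} (x : Q n) : Q (n+1) := (x, false)

/-- The map `x ↦ (x, 1)` from `Q n` into `Q (n+1)`. -/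
def up1 {n : ℕ} (x : Q n) : Q (n+1) := (x, true)

/-- The commutator `[x,y]`, defined by `xy = (yx)[x,y]`. -/
def comm {n : ℕ} (x y : Q n) : Q n := (y * x)⁻¹ * (x * y)

/-- The associator `[x,y,z]`, defined by `(xy)z = (x(yz))[x,y,z]`. -/
def assoc {n : ℕ} (x y z : Q n) : Q n := (x * (y * z))⁻¹ * ((x * y) * z)

/-- A subloop of the Cayley-Dickson loop `Q n`: a subset containing `1` and closed
under multiplication and inverses (= conjugates). -/
structure Subloop (n : ℕ) where
  carrier : Set (Q n)
  one_mem : (1 : Q n) ∈ carrier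
  mul_mem : ∀ ⦃x y : Q n⦄, x ∈ carrier → y ∈ carrier → x * y ∈ carrier
  inv_mem : ∀ ⦃x : Q n⦄, x ∈ carrier → x⁻¹ ∈ carrier

/-- The subloop of `Q n` generated by a set `s`. -/
def closure (n : ℕ) (s : Set (Q n)) : Set (Q n) :=
  ⋂₀ {t : Set (Q n) | s ⊆ t ∧ (1 : Q n) ∈ t ∧
      (∀ x ∈ t, ∀ y ∈ t, x * y ∈ t) ∧ (∀ x ∈ t, x⁻¹ ∈ t)}

end Q

namespace Q
theorem mk_inj {n : ℕ} {x y : Q n} {b c : Bool} :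
    @Eq (Q (n+1)) (x, b) (y, c) ↔ x = y ∧ b = c :=
  ⟨fun h => by cases h; exact ⟨rfl, rfl⟩, fun ⟨h1, h2⟩ => by rw [h1, h2]⟩
end Q
namespace Q
theorem nneg : ∀ n (a : Q n), neg n (neg n a) = a
  | 0, a => by cases a <;> rfl
  | n+1, (x, b) => by simp [neg, nneg n x] <;> rfl

theorem neg_ne : ∀ n (a : Q n), neg n a ≠ a
  | 0, a => by cases a <;> exact fun h => Bool.noConfusion h
  | n+1, (x, b) => fun h => neg_ne n x (mk_inj.1 h).1

theorem cone : ∀ n, conj n (one n) = one n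
  | 0 => rfl
  | n+1 => by simp [conj, one, cone n] <;> rfl

theorem cneg : ∀ n (a : Q n), conj n (neg n a) = neg n (conj n a)
  | 0, a => rfl
  | n+1, (x, b) => by cases b <;> simp [conj, neg, cneg n x] <;> rfl

theorem cconj : ∀ n (a : Q n), conj n (conj n a) = a
  | 0, a => rfl
  | n+1, (x, b) => by cases b <;> simp [conj, neg, cconj n x, nneg n x] <;> rfl

theorem onem : ∀ n (a : Q n), mul n (one n) a = a
  | 0, a => by cases a <;> rfl
  | n+1, (x, b) => by cases b <;> simp [mul, one, cone n, onem n, mone n] <;> rfl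
where mone : ∀ n (a : Q n), mul n a (one n) = a
  | 0, a => by cases a <;> rfl
  | n+1, (x, b) => by cases b <;> simp [mul, one, cone n, onem n, mone n] <;> rfl

theorem mone : ∀ n (a : Q n), mul n a (one n) = a := onem.mone

theorem negm : ∀ n (a b : Q n), mul n (neg n a) b = neg n (mul n a b)
  | 0, a, b => by cases a <;> cases b <;> rfl
  | n+1, (x, b), (y, c) => by
    cases b <;> cases c <;> simp [mul, neg, cneg, negm n, mneg n, nneg] <;> rfl
where mneg : ∀ n (a b : Q n), mul n a (neg n b) = neg n (mul n a b)
  | 0, a, b => by cases a <;> cases b <;> rfl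
  | n+1, (x, b), (y, c) => by
    cases b <;> cases c <;> simp [mul, neg, cneg, negm n, mneg n, nneg] <;> rfl

theorem mneg : ∀ n (a b : Q n), mul n a (neg n b) = neg n (mul n a b) := negm.mneg

theorem cmulself : ∀ n (a : Q n), mul n (conj n a) a = one n
  | 0, a => by cases a <;> rfl
  | n+1, (x, b) => by
    cases b <;> simp [mul, conj, one, neg, cmulself n, cneg, negm, mneg, nneg] <;> rfl

theorem mulcself : ∀ n (a : Q n), mul n a (conj n a) = one n
  | 0, a => by cases a <;> rfl
  | n+1, (x, b) => by
    cases b <;> simp [mul, conj, one, neg, mulcself n, cmulself n, cconj, cneg, negm, mneg, nneg] <;> rfl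

theorem cmul : ∀ n (a b : Q n), conj n (mul n a b) = mul n (conj n b) (conj n a)
  | 0, a, b => by cases a <;> cases b <;> rfl
  | n+1, (x, b), (y, c) => by
    cases b <;> cases c <;>
      simp [mul, conj, neg, cmul n, cneg, cconj, negm, mneg, nneg] <;> rfl

theorem conj_or : ∀ n (a : Q n), conj n a = a ∨ conj n a = neg n a
  | 0, a => .inl rfl
  | n+1, (x, b) => by
    cases b
    · rcases conj_or n x with h | h
      · exact .inl (by simp [conj, h] <;> rfl)
      · exact .inr (by simp [conj, neg, h] <;> rfl)
    · exact .inr (by simp [conj, neg] <;> rfl)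

theorem conj_eq_self : ∀ n (a : Q n), conj n a = a ↔ (a = one n ∨ a = neg n (one n))
  | 0, a => by cases a; exacts [iff_of_true rfl (.inl rfl), iff_of_true rfl (.inr rfl)]
  | n+1, (x, b) => by
    cases b
    · simp [conj, one, neg, mk_inj, conj_eq_self n x]
    · simp [conj, one, neg, mk_inj, neg_ne n x]
end Q
namespace Q
theorem sq_of_conj {n : ℕ} {x : Q n} (h : conj n x = x) : mul n x x = one n := by
  have := mulcself n x; rwa [h] at this

theorem sq_of_conj' {n : ℕ} {x : Q n} (h : conj n x = neg n x) :
    mul n x x = neg n (one n) := by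
  have := mulcself n x
  rw [h, mneg] at this
  rw [← nneg n (mul n x x), this]

theorem conj_sq : ∀ (n : ℕ) (x : Q n),
    (conj n x = x ∧ mul n x x = one n) ∨
    (conj n x = neg n x ∧ mul n x x = neg n (one n)) := fun n x => by
  rcases conj_or n x with h | h
  · exact .inl ⟨h, sq_of_conj h⟩
  · exact .inr ⟨h, sq_of_conj' h⟩

theorem alt : ∀ n (a b : Q n),
    mul n a (mul n a b) = mul n (mul n a a) b ∧
    mul n (mul n a b) b = mul n a (mul n b b)
  | 0, a, b => by cases a <;> cases b <;> exact ⟨rfl, rfl⟩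
  | n+1, (x, b), (y, c) => by
    have L : ∀ u v : Q n, mul n u (mul n u v) = mul n (mul n u u) v := fun u v => (alt n u v).1
    have R : ∀ u v : Q n, mul n (mul n u v) v = mul n u (mul n v v) := fun u v => (alt n u v).2
    rcases conj_sq n x with ⟨hx, hxx⟩ | ⟨hx, hxx⟩ <;> rcases conj_sq n y with ⟨hy, hyy⟩ | ⟨hy, hyy⟩ <;>
    cases b <;> cases c <;>
      constructor <;>
      simp [mul, conj, neg, hx, hy, hxx, hyy, L, R, cmul, cneg, cconj,
        negm, mneg, nneg, cmulself, mulcself, onem, mone, cone] <;> rfl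
end Q
namespace Q
theorem flex : ∀ n (a b : Q n), mul n (mul n a b) a = mul n a (mul n b a)
  | 0, a, b => by cases a <;> cases b <;> rfl
  | n+1, (x, b), (y, c) => by
    have L : ∀ u v : Q n, mul n u (mul n u v) = mul n (mul n u u) v := fun u v => (alt n u v).1
    have R : ∀ u v : Q n, mul n (mul n u v) v = mul n u (mul n v v) := fun u v => (alt n u v).2
    rcases conj_sq n x with ⟨hx, hxx⟩ | ⟨hx, hxx⟩ <;> rcases conj_sq n y with ⟨hy, hyy⟩ | ⟨hy, hyy⟩ <;>
    cases b <;> cases c <;>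
      simp [mul, conj, neg, hx, hy, hxx, hyy, L, R, flex n, cmul, cneg, cconj,
        negm, mneg, nneg, cmulself, mulcself, onem, mone, cone] <;> rfl

theorem comm_or : ∀ n (a b : Q n), mul n b a = mul n a b ∨ mul n b a = neg n (mul n a b)
  | 0, a, b => by cases a <;> cases b <;> exact .inl rfl
  | n+1, (x, b), (y, c) => by
    rcases conj_sq n x with ⟨hx, hxx⟩ | ⟨hx, hxx⟩ <;> rcases conj_sq n y with ⟨hy, hyy⟩ | ⟨hy, hyy⟩ <;>
    cases b <;> cases c <;>
    rcases comm_or n x y with h | h <;>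
      first
        | (apply Or.inl; simp [mul, conj, neg, hx, hy, h, negm, mneg, nneg] <;> rfl; done)
        | (apply Or.inr; simp [mul, conj, neg, hx, hy, h, negm, mneg, nneg] <;> rfl; done)
end Q
namespace Q
variable {n : ℕ}

theorem nn (a : Q n) : -(-a) = a := nneg n a
theorem om (a : Q n) : 1 * a = a := onem n a
theorem mo (a : Q n) : a * 1 = a := mone n a
theorem nm (a b : Q n) : (-a) * b = -(a * b) := negm n a b
theorem mn (a b : Q n) : a * (-b) = -(a * b) := mneg n a b
theorem inv_one' : (1 : Q n)⁻¹ = 1 := cone n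
theorem inv_neg' (a : Q n) : (-a)⁻¹ = -(a⁻¹) := cneg n a
theorem mul_inv' (a : Q n) : a * a⁻¹ = 1 := mulcself n a
theorem neg_ne' (a : Q n) : -a ≠ a := neg_ne n a
theorem one_ne_neg_one : (1 : Q n) ≠ -1 := (neg_ne n 1).symm
theorem neg_inj_iff {a b : Q n} : -a = -b ↔ a = b :=
  ⟨fun h => by rw [← nn a, h, nn], fun h => by rw [h]⟩
theorem neg_eq_iff {a b : Q n} : -a = b ↔ a = -b :=
  ⟨fun h => by rw [← h, nn], fun h => by rw [h, nn]⟩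
theorem Lalt (a b : Q n) : a * (a * b) = (a * a) * b := (alt n a b).1
theorem Ralt (a b : Q n) : (a * b) * b = a * (b * b) := (alt n a b).2
theorem flex' (a b : Q n) : (a * b) * a = a * (b * a) := flex n a b
theorem inv_mul_rev (a b : Q n) : (a * b)⁻¹ = b⁻¹ * a⁻¹ := cmul n a b
theorem comm_or' (a b : Q n) : b * a = a * b ∨ b * a = -(a * b) := comm_or n a b
theorem inv_eq_self_iff {a : Q n} : a⁻¹ = a ↔ (a = 1 ∨ a = -1) := conj_eq_self n a

theorem sq_neg_one {a : Q n} (h1 : a ≠ 1) (h2 : a ≠ -1) : a⁻¹ = -a ∧ a * a = -1 := by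
  rcases conj_sq n a with ⟨h, _⟩ | ⟨h, hs⟩
  · rcases (conj_eq_self n a).1 h with rfl | rfl
    · exact absurd rfl h1
    · exact absurd rfl h2
  · exact ⟨h, hs⟩

theorem subset_closure {s : Set (Q n)} : s ⊆ closure n s :=
  fun _ ha => Set.mem_sInter.2 fun _ ht => ht.1 ha

theorem one_mem_closure {s : Set (Q n)} : (1 : Q n) ∈ closure n s :=
  Set.mem_sInter.2 fun _ ht => ht.2.1

theorem mul_mem_closure {s : Set (Q n)} {a b : Q n}
    (ha : a ∈ closure n s) (hb : b ∈ closure n s) : a * b ∈ closure n s :=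
  Set.mem_sInter.2 fun t ht =>
    ht.2.2.1 a (Set.mem_sInter.1 ha t ht) b (Set.mem_sInter.1 hb t ht)

theorem closure_subset {s t : Set (Q n)} (h1 : s ⊆ t) (h2 : (1 : Q n) ∈ t)
    (h3 : ∀ a ∈ t, ∀ b ∈ t, a * b ∈ t) (h4 : ∀ a ∈ t, a⁻¹ ∈ t) : closure n s ⊆ t :=
  Set.sInter_subset_of_mem ⟨h1, h2, h3, h4⟩

theorem assoc_of (x y : Q n) (f : Q n → QuaternionGroup 2)
    (hinj : Set.InjOn f (closure n {x, y}))
    (hhom : ∀ a ∈ closure n {x, y}, ∀ b ∈ closure n {x, y}, f (a * b) = f a * f b) :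
    ∀ a ∈ closure n {x, y}, ∀ b ∈ closure n {x, y}, ∀ c ∈ closure n {x, y},
      (a * b) * c = a * (b * c) := by
  intro a ha b hb c hc
  have hab := mul_mem_closure ha hb
  have hbc := mul_mem_closure hb hc
  refine hinj (mul_mem_closure hab hc) (mul_mem_closure ha hbc) ?_
  rw [hhom _ hab _ hc, hhom _ ha _ hb, hhom _ ha _ hbc, hhom _ hb _ hc, mul_assoc]
end Q
namespace Q
open QuaternionGroup in
theorem trivial_case (n : ℕ) (x y : Q n) (hx : x = 1 ∨ x = -1) (hy : y = 1 ∨ y = -1) :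
    (∃ f : Q n → QuaternionGroup 2,
      Set.InjOn f (Q.closure n {x, y}) ∧
      ∀ a ∈ Q.closure n {x, y}, ∀ b ∈ Q.closure n {x, y}, f (a * b) = f a * f b) := by
  have h1 : (1 : Q n) ≠ -1 := one_ne_neg_one
  have hsub : closure n {x, y} ⊆ ({1, -1} : Set (Q n)) := by
    refine closure_subset ?_ (by simp) ?_ ?_
    · rintro a (rfl | rfl) <;> simp [hx, hy]
    · intro a ha b hb
      simp only [Set.mem_insert_iff, Set.mem_singleton_iff] at ha hb ⊢
      rcases ha with rfl | rfl <;> rcases hb with rfl | rfl <;>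
        simp [om, mo, nm, mn, nn]
    · intro a ha
      simp only [Set.mem_insert_iff, Set.mem_singleton_iff] at ha ⊢
      rcases ha with rfl | rfl <;> simp [inv_one', inv_neg']
  refine ⟨fun a => if a = -1 then QuaternionGroup.a 2 else 1, ?_, ?_⟩
  · intro a ha b hb h
    rcases hsub ha with rfl | rfl <;> rcases hsub hb with rfl | rfl <;>
      first
        | rfl
        | (simp [h1, Ne.symm h1] at h; exact absurd h (by decide))
  · intro a ha b hb
    rcases hsub ha with rfl | rfl <;> rcases hsub hb with rfl | rfl <;>
      simp [om, mo, nm, mn, nn, h1, Ne.symm h1] <;> decide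
end Q
namespace Q
theorem cyclic_case (n : ℕ) (x y w : Q n) (hw1 : w ≠ 1) (hw2 : w ≠ -1)
    (hx : x = 1 ∨ x = -1 ∨ x = w ∨ x = -w) (hy : y = 1 ∨ y = -1 ∨ y = w ∨ y = -w) :
    (∃ f : Q n → QuaternionGroup 2,
      Set.InjOn f (Q.closure n {x, y}) ∧
      ∀ a ∈ Q.closure n {x, y}, ∀ b ∈ Q.closure n {x, y}, f (a * b) = f a * f b) := by
  obtain ⟨hwi, hww⟩ := sq_neg_one hw1 hw2
  have h1 : (1 : Q n) ≠ -1 := one_ne_neg_one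
  have hnw : -w ≠ w := neg_ne' w
  have hA : (1 : Q n) ≠ -w := fun h => hw2 (neg_eq_iff.1 h.symm)
  have hB : (-1 : Q n) ≠ -w := fun h => hw1 (neg_inj_iff.1 h.symm)
  have hD : -w ≠ -1 := fun h => hw1 (neg_inj_iff.1 h)
  have hsub : closure n {x, y} ⊆ ({1, -1, w, -w} : Set (Q n)) := by
    refine closure_subset ?_ (by simp) ?_ ?_
    · rintro a (rfl | rfl) <;>
        [rcases hx with rfl|rfl|rfl|rfl; rcases hy with rfl|rfl|rfl|rfl] <;> simp
    · intro a ha b hb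
      simp only [Set.mem_insert_iff, Set.mem_singleton_iff] at ha hb ⊢
      rcases ha with rfl | rfl | rfl | rfl <;> rcases hb with rfl | rfl | rfl | rfl <;>
        simp [om, mo, nm, mn, nn, hww]
    · intro a ha
      simp only [Set.mem_insert_iff, Set.mem_singleton_iff] at ha ⊢
      rcases ha with rfl | rfl | rfl | rfl <;> simp [inv_one', inv_neg', hwi, nn]
  refine ⟨fun a => if a = w then QuaternionGroup.a 1 else if a = -w then QuaternionGroup.a 3
    else if a = -1 then QuaternionGroup.a 2 else 1, ?_, ?_⟩
  · intro a ha b hb h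
    rcases hsub ha with rfl | rfl | rfl | rfl <;> rcases hsub hb with rfl | rfl | rfl | rfl <;>
      first
        | rfl
        | (simp [h1, Ne.symm h1, hw1, Ne.symm hw1, hw2, Ne.symm hw2, hnw, Ne.symm hnw,
            hA, Ne.symm hA, hB, Ne.symm hB, hD, Ne.symm hD] at h
           exact absurd h (by decide))
  · intro a ha b hb
    rcases hsub ha with rfl | rfl | rfl | rfl <;> rcases hsub hb with rfl | rfl | rfl | rfl <;>
      simp [om, mo, nm, mn, nn, hww, h1, Ne.symm h1, hw1, Ne.symm hw1, hw2, Ne.symm hw2,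
        hnw, Ne.symm hnw, hA, Ne.symm hA, hB, Ne.symm hB, hD, Ne.symm hD] <;> decide
end Q
namespace Q
theorem generic_case (n : ℕ) (x y : Q n) (hx1 : x ≠ 1) (hx2 : x ≠ -1)
    (hy1 : y ≠ 1) (hy2 : y ≠ -1) (hyx : y ≠ x) (hynx : y ≠ -x) :
    (∃ f : Q n → QuaternionGroup 2,
      Set.InjOn f (Q.closure n {x, y}) ∧
      ∀ a ∈ Q.closure n {x, y}, ∀ b ∈ Q.closure n {x, y}, f (a * b) = f a * f b) := by
  obtain ⟨hxi, hxx⟩ := sq_neg_one hx1 hx2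
  obtain ⟨hyi, hyy⟩ := sq_neg_one hy1 hy2
  have h1 : (1 : Q n) ≠ -1 := one_ne_neg_one
  -- products with z = x*y
  have hxz : x * (x * y) = -y := by rw [Lalt, hxx, nm, om]
  have hzy : (x * y) * y = -x := by rw [Ralt, hyy, mn, mo]
  -- z is not ±1, ±x, ±y
  have hz1 : x * y ≠ 1 := by
    intro h; have e := hxz; rw [h, mo] at e; exact hynx (by rw [← nn y, ← e])
  have hz2 : x * y ≠ -1 := by
    intro h; have e := hxz; rw [h, mn, mo] at e; exact hyx (neg_inj_iff.1 e).symm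
  -- anticommutativity
  have hanti : y * x = -(x * y) := by
    rcases comm_or' x y with h | h
    · exfalso
      have hcz : (x * y)⁻¹ = x * y := by rw [inv_mul_rev, hyi, hxi, nm, mn, nn, h]
      rcases inv_eq_self_iff.1 hcz with h' | h'
      · exact hz1 h'
      · exact hz2 h'
    · exact h
  have hyz : y * (x * y) = x := by rw [← flex', hanti, nm, hzy, nn]
  have hzx : (x * y) * x = y := by rw [flex', hanti, mn, hxz, nn]
  have hzi : (x * y)⁻¹ = -(x * y) := by rw [inv_mul_rev, hyi, hxi, nm, mn, nn, hanti]
  have hzz : (x * y) * (x * y) = -1 := by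
    have e := mul_inv' (x * y); rw [hzi, mn] at e
    rw [← nn ((x*y)*(x*y)), e]
  have hzx' : x * y ≠ x := by
    intro h; have e := hzx; rw [h, hxx] at e; exact hy2 e.symm
  have hznx : x * y ≠ -x := by
    intro h; have e := hzx; rw [h, nm, hxx, nn] at e; exact hy1 e.symm
  have hzy' : x * y ≠ y := by
    intro h; have e := hyz; rw [h, hyy] at e; exact hx2 e.symm
  have hzny : x * y ≠ -y := by
    intro h; have e := hyz; rw [h, mn, hyy, nn] at e; exact hx1 e.symm
  -- all the inequality orientations needed to evaluate the ifs
  have nx1 : -x ≠ 1 := fun h => hx2 (neg_eq_iff.1 h)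
  have nxm1 : -x ≠ -1 := fun h => hx1 (neg_inj_iff.1 h)
  have ny1 : -y ≠ 1 := fun h => hy2 (neg_eq_iff.1 h)
  have nym1 : -y ≠ -1 := fun h => hy1 (neg_inj_iff.1 h)
  have nz1 : -(x * y) ≠ 1 := fun h => hz2 (neg_eq_iff.1 h)
  have nzm1 : -(x * y) ≠ -1 := fun h => hz1 (neg_inj_iff.1 h)
  have nxx : -x ≠ x := neg_ne' x
  have nyy : -y ≠ y := neg_ne' y
  have nzz : -(x * y) ≠ x * y := neg_ne' (x * y)
  have nyx : -y ≠ x := fun h => hynx (by rw [← nn y, h])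
  have nynx : -y ≠ -x := fun h => hyx (neg_inj_iff.1 h)
  have nzx : -(x * y) ≠ x := fun h => hznx (by rw [← nn (x*y), h])
  have nznx : -(x * y) ≠ -x := fun h => hzx' (neg_inj_iff.1 h)
  have nzy : -(x * y) ≠ y := fun h => hzny (by rw [← nn (x*y), h])
  have nzny : -(x * y) ≠ -y := fun h => hzy' (neg_inj_iff.1 h)
  have hsub : closure n {x, y} ⊆
      ({1, -1, x, -x, y, -y, x * y, -(x * y)} : Set (Q n)) := by
    refine closure_subset ?_ (by simp) ?_ ?_
    · rintro a (rfl | rfl) <;> simp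
    · intro a ha b hb
      simp only [Set.mem_insert_iff, Set.mem_singleton_iff] at ha hb ⊢
      rcases ha with rfl|rfl|rfl|rfl|rfl|rfl|rfl|rfl <;>
        rcases hb with rfl|rfl|rfl|rfl|rfl|rfl|rfl|rfl <;>
        simp [om, mo, nm, mn, nn, hxx, hyy, hzz, hxz, hzy, hyz, hzx, hanti]
    · intro a ha
      simp only [Set.mem_insert_iff, Set.mem_singleton_iff] at ha ⊢
      rcases ha with rfl|rfl|rfl|rfl|rfl|rfl|rfl|rfl <;>
        simp [inv_one', inv_neg', hxi, hyi, hzi, nn]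
  refine ⟨fun a =>
    if a = x then QuaternionGroup.a 1 else if a = -x then QuaternionGroup.a 3
    else if a = y then QuaternionGroup.xa 0 else if a = -y then QuaternionGroup.xa 2
    else if a = x * y then QuaternionGroup.xa 3 else if a = -(x * y) then QuaternionGroup.xa 1
    else if a = -1 then QuaternionGroup.a 2 else 1, ?_, ?_⟩
  · intro a ha b hb h
    rcases hsub ha with rfl|rfl|rfl|rfl|rfl|rfl|rfl|rfl <;>
      rcases hsub hb with rfl|rfl|rfl|rfl|rfl|rfl|rfl|rfl <;>
      first
        | rfl
        | (simp only [h1, Ne.symm h1, hx1, Ne.symm hx1, hx2, Ne.symm hx2,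
            hy1, Ne.symm hy1, hy2, Ne.symm hy2, hyx, Ne.symm hyx, hynx, Ne.symm hynx,
            hz1, Ne.symm hz1, hz2, Ne.symm hz2, hzx', Ne.symm hzx', hznx, Ne.symm hznx,
            hzy', Ne.symm hzy', hzny, Ne.symm hzny, nx1, Ne.symm nx1, nxm1, Ne.symm nxm1,
            ny1, Ne.symm ny1, nym1, Ne.symm nym1, nz1, Ne.symm nz1, nzm1, Ne.symm nzm1,
            nxx, Ne.symm nxx, nyy, Ne.symm nyy, nzz, Ne.symm nzz, nyx, Ne.symm nyx,
            nynx, Ne.symm nynx, nzx, Ne.symm nzx, nznx, Ne.symm nznx, nzy, Ne.symm nzy,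
            nzny, Ne.symm nzny] at h
           simp only [if_true, if_false, ite_true, ite_false, if_neg, if_pos] at h
           exact absurd h (by decide))
  · intro a ha b hb
    rcases hsub ha with rfl|rfl|rfl|rfl|rfl|rfl|rfl|rfl <;>
      rcases hsub hb with rfl|rfl|rfl|rfl|rfl|rfl|rfl|rfl <;>
      simp [om, mo, nm, mn, nn, hxx, hyy, hzz, hxz, hzy, hyz, hzx, hanti,
        h1, Ne.symm h1, hx1, Ne.symm hx1, hx2, Ne.symm hx2,
        hy1, Ne.symm hy1, hy2, Ne.symm hy2, hyx, Ne.symm hyx, hynx, Ne.symm hynx,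
        hz1, Ne.symm hz1, hz2, Ne.symm hz2, hzx', Ne.symm hzx', hznx, Ne.symm hznx,
        hzy', Ne.symm hzy', hzny, Ne.symm hzny, nx1, Ne.symm nx1, nxm1, Ne.symm nxm1,
        ny1, Ne.symm ny1, nym1, Ne.symm nym1, nz1, Ne.symm nz1, nzm1, Ne.symm nzm1,
        nxx, Ne.symm nxx, nyy, Ne.symm nyy, nzz, Ne.symm nzz, nyx, Ne.symm nyx,
        nynx, Ne.symm nynx, nzx, Ne.symm nzx, nznx, Ne.symm nznx, nzy, Ne.symm nzy,
        nzny, Ne.symm nzny] <;> decide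
end Q



/-- Any pair of elements of a Cayley-Dickson loop `Q n` generates a subloop isomorphic
to a subgroup of the quaternion group of order 8 (via an injective multiplication-preserving
map into `QuaternionGroup 2`); in particular every two-generated subloop of `Q n`
is associative. -/
theorem Q.two_generated_quaternion (n : ℕ) (x y : Q n) :
    (∃ f : Q n → QuaternionGroup 2,
      Set.InjOn f (Q.closure n {x, y}) ∧
      ∀ a ∈ Q.closure n {x, y}, ∀ b ∈ Q.closure n {x, y}, f (a * b) = f a * f b) ∧
    (∀ a ∈ Q.closure n {x, y}, ∀ b ∈ Q.closure n {x, y}, ∀ c ∈ Q.closure n {x, y},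
      (a * b) * c = a * (b * c)) := by
  have main : (∃ f : Q n → QuaternionGroup 2,
      Set.InjOn f (Q.closure n {x, y}) ∧
      ∀ a ∈ Q.closure n {x, y}, ∀ b ∈ Q.closure n {x, y}, f (a * b) = f a * f b) := by
    by_cases hx : x = 1 ∨ x = -1
    · by_cases hy : y = 1 ∨ y = -1
      · exact Q.trivial_case n x y hx hy
      · push_neg at hy
        exact Q.cyclic_case n x y y hy.1 hy.2
          (by rcases hx with rfl | rfl <;> simp) (by simp)
    · push_neg at hx
      by_cases hy : y = 1 ∨ y = -1
      · exact Q.cyclic_case n x y x hx.1 hx.2 (by simp)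
          (by rcases hy with rfl | rfl <;> simp)
      · push_neg at hy
        by_cases hxy : y = x ∨ y = -x
        · exact Q.cyclic_case n x y x hx.1 hx.2 (by simp)
            (by rcases hxy with rfl | rfl <;> simp)
        · push_neg at hxy
          exact Q.generic_case n x y hx.1 hx.2 hy.1 hy.2 hxy.1 hxy.2
  obtain ⟨f, hinj, hhom⟩ := main
  exact ⟨⟨f, hinj, hhom⟩, Q.assoc_of x y f hinj hhom⟩
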